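/- arXiv:1411.6360 — 2 statements merged into one kernel-verified Lean document; each statement's English description precedes it below -/
import Mathlib

section
/- Let π be a finitely generated group, φ: π → π an endomorphism, and π' a φ-invariant subgroup of finite index in π. If the restriction φ' = φ|_{π'} is not an eventually trivial endomorphism, then GR(φ) = GR(φ'). -/
open Filter Topology

/-- Word length of `g` with respect to the (symmetrized) generating set `S`. -/
noncomputable def wordLength {G : Type*} [Group G] (S : Set G) (g : G) : ℕ :=
  sInf {n : ℕ | ∃ w : List G, w.length = n ∧ (∀ x ∈ w, x ∈ S ∨ x⁻¹ ∈ S) ∧ w.prod = g}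

section WL
variable {G : Type*} [Group G] {S : Set G}

def IsWord (S : Set G) (w : List G) : Prop := ∀ x ∈ w, x ∈ S ∨ x⁻¹ ∈ S

theorem wordLength_le_of_word {w : List G} (hw : IsWord S w) {g : G} (hg : w.prod = g) :
    wordLength S g ≤ w.length := Nat.sInf_le ⟨w, rfl, hw, hg⟩

theorem exists_word (hS : Subgroup.closure S = ⊤) (g : G) :
    ∃ w : List G, IsWord S w ∧ w.prod = g ∧ w.length = wordLength S g := by
  have hmem : g ∈ Subgroup.closure S := hS ▸ Subgroup.mem_top g
  have hne : ∃ w : List G, IsWord S w ∧ w.prod = g := by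
    induction hmem using Subgroup.closure_induction with
    | mem s hs => exact ⟨[s], by intro x hx; simp at hx; subst hx; exact Or.inl hs, by simp⟩
    | one => exact ⟨[], by intro x hx; simp at hx, by simp⟩
    | mul a b _ _ ha hb =>
        obtain ⟨wa, hwa, hpa⟩ := ha; obtain ⟨wb, hwb, hpb⟩ := hb
        refine ⟨wa ++ wb, ?_, by simp [hpa, hpb]⟩
        intro x hx
        rcases List.mem_append.1 hx with h | h
        exacts [hwa x h, hwb x h]
    | inv a _ ha =>
        obtain ⟨w, hw, hp⟩ := ha
        refine ⟨(w.reverse).map (·⁻¹), ?_, ?_⟩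
        · intro x hx
          simp only [List.mem_map, List.mem_reverse] at hx
          obtain ⟨y, hy, rfl⟩ := hx
          rcases hw y hy with h | h
          · exact Or.inr (by simpa using h)
          · exact Or.inl h
        · rw [← hp, List.prod_inv_reverse]
          congr 1
          simp [List.map_reverse]
  obtain ⟨w, hw, hp⟩ := hne
  have : wordLength S g ∈ {n : ℕ | ∃ w : List G, w.length = n ∧ (∀ x ∈ w, x ∈ S ∨ x⁻¹ ∈ S) ∧ w.prod = g} :=
    Nat.sInf_mem ⟨w.length, w, rfl, hw, hp⟩
  obtain ⟨w', h1, h2, h3⟩ := this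
  exact ⟨w', h2, h3, h1⟩

theorem wordLength_mul_le (hS : Subgroup.closure S = ⊤) (g h : G) :
    wordLength S (g * h) ≤ wordLength S g + wordLength S h := by
  obtain ⟨wg, hwg, hpg, hlg⟩ := exists_word hS g
  obtain ⟨wh, hwh, hph, hlh⟩ := exists_word hS h
  have : wordLength S (g * h) ≤ (wg ++ wh).length := by
    refine wordLength_le_of_word ?_ (by simp [hpg, hph])
    intro x hx; rcases List.mem_append.1 hx with h' | h'; exacts [hwg x h', hwh x h']
  simpa [hlg, hlh] using this

theorem eq_one_of_wordLength_eq_zero (hS : Subgroup.closure S = ⊤) {g : G}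
    (h : wordLength S g = 0) : g = 1 := by
  obtain ⟨w, hw, hp, hl⟩ := exists_word hS g
  rw [h, List.length_eq_zero_iff] at hl
  subst hl; simpa using hp.symm

theorem wordLength_inv_le (hS : Subgroup.closure S = ⊤) (g : G) :
    wordLength S g⁻¹ ≤ wordLength S g := by
  obtain ⟨w, hw, hp, hl⟩ := exists_word hS g
  have : wordLength S g⁻¹ ≤ ((w.reverse).map (·⁻¹)).length := by
    refine wordLength_le_of_word ?_ ?_
    · intro x hx
      simp only [List.mem_map, List.mem_reverse] at hx
      obtain ⟨y, hy, rfl⟩ := hx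
      rcases hw y hy with h | h
      · exact Or.inr (by simpa using h)
      · exact Or.inl h
    · rw [← hp, List.prod_inv_reverse]; congr 1; simp [List.map_reverse]
  simpa [hl] using this

theorem wordLength_one_le : wordLength S (1 : G) = 0 :=
  Nat.le_zero.1 (wordLength_le_of_word (w := []) (by intro x hx; simp at hx) (by simp))

theorem wordLength_list_prod_le (hS : Subgroup.closure S = ⊤) (l : List G) :
    wordLength S l.prod ≤ (l.map (wordLength S)).sum := by
  induction l with
  | nil => simp [wordLength_one_le]
  | cons x t ih =>
      simp only [List.prod_cons, List.map_cons, List.sum_cons]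
      exact le_trans (wordLength_mul_le hS x t.prod) (by omega)

/-- Lipschitz bound for multiplicative maps. -/
theorem wordLength_apply_le {H : Type*} [Group H] {U : Set H}
    (hS : Subgroup.closure S = ⊤) (hU : Subgroup.closure U = ⊤)
    {f : G → H} (hf : ∀ a b, f (a * b) = f a * f b) {K : ℕ}
    (hK : ∀ s ∈ S, wordLength U (f s) ≤ K) (g : G) :
    wordLength U (f g) ≤ K * wordLength S g := by
  have hf1 : f 1 = 1 := by
    have h := hf 1 1
    rw [mul_one] at h
    exact mul_eq_left.mp h.symm
  have hfinv : ∀ x : G, f x⁻¹ = (f x)⁻¹ := by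
    intro x
    have := hf x x⁻¹; rw [mul_inv_cancel, hf1] at this
    exact eq_inv_of_mul_eq_one_right this.symm
  have hprod : ∀ w : List G, f w.prod = (w.map f).prod := by
    intro w; induction w with
    | nil => simpa using hf1
    | cons x t ih => simp [hf, ih]
  obtain ⟨w, hw, hp, hl⟩ := exists_word hS g
  have hbound : ∀ x ∈ w, wordLength U (f x) ≤ K := by
    intro x hx
    rcases hw x hx with h | h
    · exact hK x h
    · have h1 : f x = (f x⁻¹)⁻¹ := by rw [hfinv, inv_inv]
      rw [h1]
      exact le_trans (wordLength_inv_le hU _) (hK _ h)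
  calc wordLength U (f g) = wordLength U (w.map f).prod := by rw [← hp, hprod]
    _ ≤ ((w.map f).map (wordLength U)).sum := wordLength_list_prod_le hU _
    _ ≤ ((w.map f).map (wordLength U)).length • K := by
        refine List.sum_le_card_nsmul _ _ ?_
        intro x hx
        simp only [List.map_map, List.mem_map, Function.comp] at hx
        obtain ⟨y, hy, rfl⟩ := hx
        exact hbound y hy
    _ = K * wordLength S g := by simp [hl, mul_comm]

end WL

/-- `L_k(f, S) = max_{s ∈ S} L(f^k(s), S)`. -/
noncomputable def Lk {G : Type*} [Group G] (S : Finset G) (f : G → G) (k : ℕ) : ℕ :=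
  S.sup fun s => wordLength (S : Set G) (f^[k] s)

/-- The growth rate `GR(f) = inf_{k ≥ 1} L_k(f,S)^{1/k}` (which equals
`lim_{k→∞} L_k(f,S)^{1/k}`). -/
noncomputable def GR {G : Type*} [Group G] (S : Finset G) (f : G → G) : ℝ :=
  ⨅ k : ℕ+, (Lk S f k : ℝ) ^ (((k : ℕ) : ℝ))⁻¹

/-- `f` is eventually trivial if some iterate is the trivial endomorphism. -/
def EventuallyTrivial {G : Type*} [Group G] (f : G → G) : Prop :=
  ∃ N : ℕ, 0 < N ∧ ∀ g, f^[N] g = 1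

section LK
variable {G : Type*} [Group G] {S : Finset G} {f : G → G}

theorem iterate_mul (hf : ∀ a b, f (a * b) = f a * f b) (k : ℕ) :
    ∀ a b, f^[k] (a * b) = f^[k] a * f^[k] b := by
  induction k with
  | zero => simp
  | succ n ih => intro a b; rw [Function.iterate_succ_apply', Function.iterate_succ_apply',
      Function.iterate_succ_apply', ih a b, hf]

theorem wordLength_le_Lk {s : G} (hs : s ∈ S) (k : ℕ) :
    wordLength (S : Set G) (f^[k] s) ≤ Lk S f k := Finset.le_sup (f := fun s => wordLength (S : Set G) (f^[k] s)) hs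

theorem Lk_apply_le (hS : Subgroup.closure (S : Set G) = ⊤)
    (hf : ∀ a b, f (a * b) = f a * f b) (k : ℕ) (g : G) :
    wordLength (S : Set G) (f^[k] g) ≤ Lk S f k * wordLength (S : Set G) g :=
  wordLength_apply_le hS hS (iterate_mul hf k) (fun s hs => wordLength_le_Lk hs k) g

theorem Lk_add_le (hS : Subgroup.closure (S : Set G) = ⊤)
    (hf : ∀ a b, f (a * b) = f a * f b) (a b : ℕ) :
    Lk S f (a + b) ≤ Lk S f a * Lk S f b := by
  refine Finset.sup_le fun s hs => ?_
  rw [Function.iterate_add_apply]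
  exact le_trans (Lk_apply_le hS hf a _)
    (Nat.mul_le_mul_left _ (wordLength_le_Lk hs b))

theorem iterate_eq_one_of_Lk_eq_zero (hS : Subgroup.closure (S : Set G) = ⊤)
    (hf : ∀ a b, f (a * b) = f a * f b) {k : ℕ} (h : Lk S f k = 0) (g : G) :
    f^[k] g = 1 := by
  refine eq_one_of_wordLength_eq_zero hS ?_
  have := Lk_apply_le hS hf k g
  rw [h] at this
  omega

end LK

section Analytic

theorem submult_pow_bound (M : ℕ → ℕ) (hsub : ∀ a b, M (a + b) ≤ M a * M b)
    (k0 : ℕ) : ∀ q r : ℕ, M (k0 * q + r) ≤ M k0 ^ q * M r := by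
  intro q
  induction q with
  | zero => simp
  | succ n ih =>
      intro r
      have h1 : k0 * (n + 1) + r = k0 + (k0 * n + r) := by ring
      rw [h1]
      calc M (k0 + (k0 * n + r)) ≤ M k0 * M (k0 * n + r) := hsub _ _
        _ ≤ M k0 * (M k0 ^ n * M r) := Nat.mul_le_mul_left _ (ih r)
        _ = M k0 ^ (n + 1) * M r := by ring

theorem geom_of_inf_lt (M : ℕ → ℕ) (hsub : ∀ a b, M (a + b) ≤ M a * M b)
    (hpos : ∀ k, 1 ≤ M k) {β : ℝ}
    (hβ : (⨅ k : ℕ+, (M k : ℝ) ^ (((k : ℕ) : ℝ))⁻¹) < β) :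
    1 < β ∧ ∃ C : ℝ, 1 ≤ C ∧ ∀ k, (M k : ℝ) ≤ C * β ^ k := by
  obtain ⟨i, hi⟩ := exists_lt_of_ciInf_lt hβ
  have hi1 : (1 : ℝ) ≤ (M i : ℝ) ^ (((i : ℕ) : ℝ))⁻¹ :=
    Real.one_le_rpow (by exact_mod_cast hpos i) (by positivity)
  have hβ1 : 1 < β := lt_of_le_of_lt hi1 hi
  have hine : (i : ℕ) ≠ 0 := i.pos.ne'
  have hMi : (M i : ℝ) < β ^ (i : ℕ) := by
    have h0 : (0 : ℝ) ≤ (M i : ℝ) ^ (((i : ℕ) : ℝ))⁻¹ := Real.rpow_nonneg (by positivity) _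
    have := pow_lt_pow_left₀ hi h0 hine
    rwa [Real.rpow_inv_natCast_pow (by positivity) hine] at this
  set C0 : ℕ := (Finset.range (i : ℕ)).sup M with hC0
  refine ⟨hβ1, (C0 : ℝ) ⊔ 1, le_max_right _ _, fun k => ?_⟩
  obtain ⟨q, r, hr, hk⟩ : ∃ q r : ℕ, r < (i : ℕ) ∧ (i : ℕ) * q + r = k :=
    ⟨k / i, k % i, Nat.mod_lt _ i.pos, Nat.div_add_mod k i⟩
  have h1 : M k ≤ M i ^ q * M r := hk ▸ submult_pow_bound M hsub i q r
  have h2 : (M r : ℝ) ≤ (C0 : ℝ) ⊔ 1 := by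
    have : M r ≤ C0 := Finset.le_sup (Finset.mem_range.2 hr)
    exact le_trans (by exact_mod_cast this) (le_max_left _ _)
  have h3 : ((M i : ℝ)) ^ q ≤ β ^ ((i : ℕ) * q) := by
    rw [pow_mul]
    exact pow_le_pow_left₀ (by positivity) hMi.le q
  have h4 : β ^ ((i : ℕ) * q) ≤ β ^ k := pow_le_pow_right₀ hβ1.le (by omega)
  calc (M k : ℝ) ≤ (M i : ℝ) ^ q * (M r : ℝ) := by exact_mod_cast h1
    _ ≤ β ^ ((i:ℕ) * q) * ((C0 : ℝ) ⊔ 1) := by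
        apply mul_le_mul h3 h2 (by positivity) (by positivity)
    _ ≤ β ^ k * ((C0 : ℝ) ⊔ 1) := by
        apply mul_le_mul_of_nonneg_right h4 (by positivity)
    _ = ((C0 : ℝ) ⊔ 1) * β ^ k := mul_comm _ _

theorem inf_rpow_le (L : ℕ → ℕ) {C β : ℝ} (hC : 1 ≤ C) (hβ : 1 ≤ β)
    (h : ∀ k : ℕ, 1 ≤ k → (L k : ℝ) ≤ C * β ^ k) :
    (⨅ k : ℕ+, (L k : ℝ) ^ (((k : ℕ) : ℝ))⁻¹) ≤ β := by
  have hβ0 : 0 < β := lt_of_lt_of_le one_pos hβ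
  refine le_of_forall_pos_le_add fun ε hε => ?_
  set δ : ℝ := ε / β with hδ
  have hδ0 : 0 < δ := div_pos hε hβ0
  obtain ⟨n, hn⟩ := exists_nat_ge ((C - 1) / δ)
  set k : ℕ+ := ⟨n + 1, Nat.succ_pos n⟩ with hk
  have hCk : C ≤ (1 + δ) ^ (k : ℕ) := by
    have h1 : 1 + ((k : ℕ) : ℝ) * δ ≤ (1 + δ) ^ (k : ℕ) :=
      one_add_mul_le_pow (by linarith) _
    have h2 : C ≤ 1 + ((k : ℕ) : ℝ) * δ := by
      rw [div_le_iff₀ hδ0] at hn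
      have : ((n : ℝ)) ≤ ((k : ℕ) : ℝ) := by exact_mod_cast Nat.le_succ n
      nlinarith
    linarith
  have hbd : (L k : ℝ) ≤ ((1 + δ) * β) ^ (k : ℕ) := by
    calc (L k : ℝ) ≤ C * β ^ (k : ℕ) := h k k.pos
      _ ≤ (1 + δ) ^ (k : ℕ) * β ^ (k : ℕ) :=
          mul_le_mul_of_nonneg_right hCk (by positivity)
      _ = ((1 + δ) * β) ^ (k : ℕ) := (mul_pow _ _ _).symm
  have hmono : (L k : ℝ) ^ (((k : ℕ) : ℝ))⁻¹ ≤ (((1 + δ) * β) ^ (k : ℕ)) ^ (((k : ℕ) : ℝ))⁻¹ :=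
    Real.rpow_le_rpow (by positivity) hbd (by positivity)
  have heq : ((((1 + δ) * β) ^ (k : ℕ) : ℝ)) ^ (((k : ℕ) : ℝ))⁻¹ = (1 + δ) * β := by
    rw [← Real.rpow_natCast ((1 + δ) * β) (k : ℕ), ← Real.rpow_mul (by positivity)]
    rw [mul_inv_cancel₀ (by exact_mod_cast k.pos.ne')]
    exact Real.rpow_one _
  have hfin : (1 + δ) * β = β + ε := by
    rw [hδ, add_mul, one_mul, div_mul_cancel₀ ε hβ0.ne']
  refine le_trans (ciInf_le ⟨0, ?_⟩ k) ?_
  · rintro x ⟨j, rfl⟩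
    exact Real.rpow_nonneg (by positivity) _
  · rw [← hfin]
    exact le_trans hmono (le_of_eq heq)

theorem inf_le_inf_of_dominated (L M : ℕ → ℕ) (hsub : ∀ a b, M (a + b) ≤ M a * M b)
    (hpos : ∀ k, 1 ≤ M k) (C : ℕ)
    (h : ∀ k, 1 ≤ k → L k ≤ C * ∑ j ∈ Finset.range (k + 1), M j) :
    (⨅ k : ℕ+, (L k : ℝ) ^ (((k : ℕ) : ℝ))⁻¹) ≤
      ⨅ k : ℕ+, (M k : ℝ) ^ (((k : ℕ) : ℝ))⁻¹ := by
  refine le_of_forall_pos_le_add fun ε hε => ?_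
  set β : ℝ := (⨅ k : ℕ+, (M k : ℝ) ^ (((k : ℕ) : ℝ))⁻¹) + ε with hβdef
  have hβgt : (⨅ k : ℕ+, (M k : ℝ) ^ (((k : ℕ) : ℝ))⁻¹) < β := lt_add_of_pos_right _ hε
  obtain ⟨hβ1, C1, hC1, hbound⟩ := geom_of_inf_lt M hsub hpos hβgt
  set C2 : ℝ := ((C : ℝ) * C1 * (β / (β - 1))) ⊔ 1 with hC2
  have key : ∀ k : ℕ, 1 ≤ k → (L k : ℝ) ≤ C2 * β ^ k := by
    intro k hk
    have hsum : (∑ j ∈ Finset.range (k + 1), (M j : ℝ)) ≤ C1 * (β / (β - 1)) * β ^ k := by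
      have hβm1 : 0 < β - 1 := by linarith
      have h1 : ∑ j ∈ Finset.range (k + 1), (M j : ℝ) ≤ ∑ j ∈ Finset.range (k + 1), C1 * β ^ j :=
        Finset.sum_le_sum fun j _ => hbound j
      have h2 : (∑ j ∈ Finset.range (k + 1), β ^ j) * (β - 1) = β ^ (k + 1) - 1 :=
        geom_sum_mul β (k + 1)
      have h3 : ∑ j ∈ Finset.range (k + 1), β ^ j ≤ β ^ (k + 1) / (β - 1) := by
        rw [le_div_iff₀ hβm1, h2]
        have : (0:ℝ) ≤ 1 := zero_le_one
        linarith
      calc (∑ j ∈ Finset.range (k + 1), (M j : ℝ)) ≤ C1 * ∑ j ∈ Finset.range (k + 1), β ^ j := by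
            rw [Finset.mul_sum]; exact h1
        _ ≤ C1 * (β ^ (k + 1) / (β - 1)) := by
            exact mul_le_mul_of_nonneg_left h3 (by linarith)
        _ = C1 * (β / (β - 1)) * β ^ k := by
            field_simp
            ring
    have hLk : (L k : ℝ) ≤ C2 * β ^ k := by
      have h1 : (L k : ℝ) ≤ (C : ℝ) * ∑ j ∈ Finset.range (k + 1), (M j : ℝ) := by
        have := h k hk
        push_cast
        exact_mod_cast Nat.cast_le.2 this
      calc (L k : ℝ) ≤ (C : ℝ) * (C1 * (β / (β - 1)) * β ^ k) := by
            refine le_trans h1 (mul_le_mul_of_nonneg_left hsum (by positivity))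
        _ = ((C : ℝ) * C1 * (β / (β - 1))) * β ^ k := by ring
        _ ≤ C2 * β ^ k := mul_le_mul_of_nonneg_right (le_max_left _ _) (by positivity)
    exact hLk
  exact inf_rpow_le L (le_max_right _ _) hβ1.le key

end Analytic

section Schreier

variable {π : Type*} [Group π] (N : Subgroup π)

noncomputable def rep' (g : π) : π := (Quotient.out (QuotientGroup.mk (g⁻¹) : π ⧸ N))⁻¹

theorem rep'_spec (g : π) : g * (rep' N g)⁻¹ ∈ N := by
  have h : (QuotientGroup.mk (Quotient.out (QuotientGroup.mk (g⁻¹) : π ⧸ N)) : π ⧸ N)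
      = QuotientGroup.mk (g⁻¹) := Quotient.out_eq _
  rw [QuotientGroup.eq] at h
  have h2 : rep' N g * g⁻¹ ∈ N := by
    simpa [rep'] using h
  have := N.inv_mem h2
  simpa [mul_inv_rev] using this

theorem rep'_eq_of {a b : π} (h : a * b⁻¹ ∈ N) : rep' N a = rep' N b := by
  unfold rep'
  congr 2
  rw [QuotientGroup.eq]
  simpa using h

end Schreier

section Schreier2

variable {π : Type*} [Group π] (N : Subgroup π) [N.FiniteIndex]

/-- The finite set of (inverses of) coset representatives. -/
noncomputable def repSet : Finset π :=
  letI : Fintype (π ⧸ N) := Fintype.ofFinite _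
  letI := Classical.decEq π
  Finset.univ.image (fun q : π ⧸ N => (Quotient.out q)⁻¹)

theorem rep'_mem_repSet (g : π) : rep' N g ∈ repSet N := by
  letI : Fintype (π ⧸ N) := Fintype.ofFinite _
  letI := Classical.decEq π
  unfold repSet
  exact Finset.mem_image.2 ⟨_, Finset.mem_univ _, rfl⟩

/-- The cost function: `S'`-word length of `x · rep'(x)⁻¹`. -/
noncomputable def schreierCost (S' : Finset N) (x : π) : ℕ :=
  wordLength (S' : Set N) (⟨x * (rep' N x)⁻¹, rep'_spec N x⟩ : N)

theorem schreier_bound (T : Finset π) (hT : Subgroup.closure (T : Set π) = ⊤)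
    (S' : Finset N) (hS' : Subgroup.closure (S' : Set N) = ⊤) :
    ∃ K : ℕ, ∀ g : N, wordLength (S' : Set N) g ≤
      K * wordLength (T : Set π) (g : π) + K := by
  classical
  set Tpm : Finset π := T ∪ T.image (·⁻¹) with hTpm
  set K0 : ℕ := ((repSet N) ×ˢ Tpm).sup (fun p => schreierCost N S' (p.1 * p.2)) with hK0
  have key : ∀ w : List π, IsWord (T : Set π) w →
      schreierCost N S' w.prod ≤ K0 * w.length + schreierCost N S' 1 := by
    intro w hw
    induction w using List.reverseRecOn with
    | nil => simp
    | append_singleton w t ih =>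
        have hw' : IsWord (T : Set π) w := fun x hx => hw x (by simp [hx])
        have hih := ih hw'
        set p := w.prod with hp
        have hx : (w ++ [t]).prod = p * t := by simp [hp]
        rw [hx]
        -- rep'(p*t) = rep'(rep' p * t)
        have hcoset : (p * t) * ((rep' N p) * t)⁻¹ ∈ N := by
          have := rep'_spec N p
          simpa [mul_inv_rev, mul_assoc] using this
        have hrep : rep' N (p * t) = rep' N (rep' N p * t) := rep'_eq_of N hcoset
        -- decomposition in N
        have hdecomp : (⟨p * t * (rep' N (p * t))⁻¹, rep'_spec N _⟩ : N) =
            (⟨p * (rep' N p)⁻¹, rep'_spec N _⟩ : N) *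
            (⟨(rep' N p) * t * (rep' N ((rep' N p) * t))⁻¹, rep'_spec N _⟩ : N) := by
          apply Subtype.ext
          push_cast
          rw [← hrep]
          group
        have ht : t ∈ Tpm := by
          rcases hw t (by simp) with h | h
          · exact Finset.mem_union_left _ h
          · exact Finset.mem_union_right _ (Finset.mem_image.2 ⟨t⁻¹, h, by simp⟩)
        have hmemprod : (rep' N p, t) ∈ (repSet N) ×ˢ Tpm :=
          Finset.mem_product.2 ⟨rep'_mem_repSet N p, ht⟩
        have hstep : schreierCost N S' ((rep' N p) * t) ≤ K0 :=
          Finset.le_sup (f := fun q => schreierCost N S' (q.1 * q.2)) hmemprod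
        calc schreierCost N S' (p * t)
            ≤ schreierCost N S' p + schreierCost N S' ((rep' N p) * t) := by
              unfold schreierCost
              rw [hdecomp]
              exact wordLength_mul_le hS' _ _
          _ ≤ (K0 * w.length + schreierCost N S' 1) + K0 := by
              exact Nat.add_le_add hih hstep
          _ ≤ K0 * (w ++ [t]).length + schreierCost N S' 1 := by
              simp [Nat.mul_succ]
              omega
  -- conclude
  have hrep1mem : rep' N 1 ∈ N := by
    have := rep'_spec N 1
    simpa using N.inv_mem (by simpa using this)
  set c1 : ℕ := wordLength (S' : Set N) (⟨rep' N 1, hrep1mem⟩ : N) with hc1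
  refine ⟨K0 + schreierCost N S' 1 + c1 + 1, fun g => ?_⟩
  obtain ⟨w, hw, hpw, hlw⟩ := exists_word hT (g : π)
  have hkey := key w hw
  rw [hpw] at hkey
  have hgrep : rep' N (g : π) = rep' N 1 := rep'_eq_of N (by simpa using g.2)
  have hdec : g = (⟨(g : π) * (rep' N (g : π))⁻¹, rep'_spec N _⟩ : N) *
      (⟨rep' N 1, hrep1mem⟩ : N) := by
    apply Subtype.ext
    push_cast
    rw [hgrep]
    group
  calc wordLength (S' : Set N) g
      ≤ schreierCost N S' (g : π) + c1 := by
        conv_lhs => rw [hdec]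
        exact wordLength_mul_le hS' _ _
    _ ≤ (K0 * w.length + schreierCost N S' 1) + c1 := Nat.add_le_add_right hkey _
    _ ≤ (K0 + schreierCost N S' 1 + c1 + 1) * wordLength (T : Set π) (g : π)
        + (K0 + schreierCost N S' 1 + c1 + 1) := by
        rw [hlw]
        nlinarith [Nat.zero_le (wordLength (T : Set π) (g:π))]

end Schreier2

/-- If `π'` is a `φ`-invariant finite-index subgroup of the finitely
generated group `π` and the restriction `φ' = φ|_{π'}` is not eventually trivial,
then `GR(φ) = GR(φ')`. -/
theorem GR_eq_restriction_of_finiteIndex {π : Type*} [Group π] (S : Finset π)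
    (hS : Subgroup.closure (S : Set π) = ⊤) (φ : π →* π)
    (N : Subgroup π) [N.FiniteIndex] (hinv : ∀ g ∈ N, φ g ∈ N)
    (S' : Finset N) (hS' : Subgroup.closure (S' : Set N) = ⊤)
    (hnt : ¬ EventuallyTrivial (fun x : N => (⟨φ x, hinv x x.2⟩ : N))) :
    GR S ⇑φ = GR S' (fun x : N => (⟨φ x, hinv x x.2⟩ : N)) := by
  classical
  set f' : N → N := fun x : N => (⟨φ x, hinv x x.2⟩ : N) with hf'def
  have hfmul : ∀ a b : π, φ (a * b) = φ a * φ b := fun a b => map_mul φ a b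
  have hf'mul : ∀ a b : N, f' (a * b) = f' a * f' b := by
    intro a b
    apply Subtype.ext
    simp [hf'def]
  have hcoe : ∀ (k : ℕ) (x : N), ((f'^[k] x : N) : π) = (⇑φ)^[k] (x : π) := by
    intro k
    induction k with
    | zero => intro x; simp
    | succ n ih =>
        intro x
        rw [Function.iterate_succ_apply', Function.iterate_succ_apply', ← ih x]
  have hNne : ∃ x : N, x ≠ 1 := by
    by_contra h
    push_neg at h
    exact hnt ⟨1, one_pos, fun g => h _⟩
  have hposS' : ∀ k, 1 ≤ Lk S' f' k := by
    intro k
    by_contra h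
    push_neg at h
    have h0 : Lk S' f' k = 0 := by omega
    have htriv : ∀ g : N, f'^[k] g = 1 := iterate_eq_one_of_Lk_eq_zero hS' hf'mul h0
    cases k with
    | zero => obtain ⟨x, hx⟩ := hNne; exact hx (by simpa using htriv x)
    | succ n => exact hnt ⟨n + 1, Nat.succ_pos n, htriv⟩
  set R : Finset π := repSet N with hRdef
  set T : Finset π := S'.image (fun x : N => (x : π)) ∪ R with hTdef
  have hmemT : ∀ s' : N, s' ∈ S' → (s' : π) ∈ T := by
    intro s' hs'
    exact Finset.mem_union_left _ (Finset.mem_image.2 ⟨s', hs', rfl⟩)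
  have hmemT' : ∀ r : π, r ∈ R → r ∈ T := fun r hr => Finset.mem_union_right _ hr
  have hNle : N ≤ Subgroup.closure (T : Set π) := by
    have h1 : N = Subgroup.closure (⇑N.subtype '' (S' : Set N)) := by
      rw [← MonoidHom.map_closure N.subtype (S' : Set N), hS', ← MonoidHom.range_eq_map,
        Subgroup.range_subtype]
    rw [h1]
    apply Subgroup.closure_mono
    rintro x ⟨y, hy, rfl⟩
    exact hmemT y hy
  have hTtop : Subgroup.closure (T : Set π) = ⊤ := by
    rw [Subgroup.eq_top_iff']
    intro g
    have h1 : rep' N g ∈ Subgroup.closure (T : Set π) :=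
      Subgroup.subset_closure (hmemT' _ (rep'_mem_repSet N g))
    have h2 : g * (rep' N g)⁻¹ ∈ Subgroup.closure (T : Set π) := hNle (rep'_spec N g)
    have := Subgroup.mul_mem _ h2 h1
    simpa using this
  have hcoeWL : ∀ x : N, wordLength (T : Set π) (x : π) ≤ wordLength (S' : Set N) x := by
    intro x
    have h := wordLength_apply_le (S := (S' : Set N)) (U := (T : Set π)) hS' hTtop
      (f := fun y : N => (y : π)) (fun a b => rfl) (K := 1) ?_ x
    · simpa using h
    · intro s hs
      have h1 : wordLength (T : Set π) ((s : π)) ≤ [(s : π)].length :=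
        wordLength_le_of_word (by
          intro x hx
          simp only [List.mem_singleton] at hx
          subst hx
          exact Or.inl (hmemT s hs)) (by simp)
      simpa using h1
  have hposT : ∀ k, 1 ≤ Lk T ⇑φ k := by
    intro k
    by_contra h
    push_neg at h
    have h0 : Lk T ⇑φ k = 0 := by omega
    have htriv : ∀ g : π, (⇑φ)^[k] g = 1 := iterate_eq_one_of_Lk_eq_zero hTtop hfmul h0
    have htriv' : ∀ g : N, f'^[k] g = 1 := by
      intro g
      apply Subtype.ext
      rw [hcoe k g]
      simpa using htriv (g : π)
    cases k with
    | zero => obtain ⟨x, hx⟩ := hNne; exact hx (by simpa using htriv' x)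
    | succ n => exact hnt ⟨n + 1, Nat.succ_pos n, htriv'⟩
  have hposS : ∀ k, 1 ≤ Lk S ⇑φ k := by
    intro k
    by_contra h
    push_neg at h
    have h0 : Lk S ⇑φ k = 0 := by omega
    have htriv : ∀ g : π, (⇑φ)^[k] g = 1 := iterate_eq_one_of_Lk_eq_zero hS hfmul h0
    have htriv' : ∀ g : N, f'^[k] g = 1 := by
      intro g
      apply Subtype.ext
      rw [hcoe k g]
      simpa using htriv (g : π)
    cases k with
    | zero => obtain ⟨x, hx⟩ := hNne; exact hx (by simpa using htriv' x)
    | succ n => exact hnt ⟨n + 1, Nat.succ_pos n, htriv'⟩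
  -- comparison S vs T
  set A : ℕ := T.sup (fun t => wordLength (S : Set π) t) with hAdef
  set B : ℕ := S.sup (fun s => wordLength (T : Set π) s) with hBdef
  have hST : ∀ g : π, wordLength (S : Set π) g ≤ A * wordLength (T : Set π) g := by
    intro g
    refine wordLength_apply_le (S := (T : Set π)) (U := (S : Set π)) hTtop hS
      (f := fun x => x) (fun a b => rfl) ?_ g
    intro t ht
    exact Finset.le_sup (f := fun t => wordLength (S : Set π) t) (Finset.mem_coe.1 ht)
  have hTS : ∀ g : π, wordLength (T : Set π) g ≤ B * wordLength (S : Set π) g := by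
    intro g
    refine wordLength_apply_le (S := (S : Set π)) (U := (T : Set π)) hS hTtop
      (f := fun x => x) (fun a b => rfl) ?_ g
    intro t ht
    exact Finset.le_sup (f := fun t => wordLength (T : Set π) t) (Finset.mem_coe.1 ht)
  have hC1 : ∀ k, Lk S ⇑φ k ≤ (A * B) * Lk T ⇑φ k := by
    intro k
    refine Finset.sup_le fun s hs => ?_
    calc wordLength (S : Set π) ((⇑φ)^[k] s)
        ≤ A * wordLength (T : Set π) ((⇑φ)^[k] s) := hST _
      _ ≤ A * (Lk T ⇑φ k * wordLength (T : Set π) s) :=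
          Nat.mul_le_mul_left _ (Lk_apply_le hTtop hfmul k s)
      _ ≤ A * (Lk T ⇑φ k * B) := by
          refine Nat.mul_le_mul_left _ (Nat.mul_le_mul_left _ ?_)
          exact Finset.le_sup (f := fun s => wordLength (T : Set π) s) hs
      _ = (A * B) * Lk T ⇑φ k := by ring
  have hC1' : ∀ k, Lk T ⇑φ k ≤ (A * B) * Lk S ⇑φ k := by
    intro k
    refine Finset.sup_le fun t ht => ?_
    calc wordLength (T : Set π) ((⇑φ)^[k] t)
        ≤ B * wordLength (S : Set π) ((⇑φ)^[k] t) := hTS _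
      _ ≤ B * (Lk S ⇑φ k * wordLength (S : Set π) t) :=
          Nat.mul_le_mul_left _ (Lk_apply_le hS hfmul k t)
      _ ≤ B * (Lk S ⇑φ k * A) := by
          refine Nat.mul_le_mul_left _ (Nat.mul_le_mul_left _ ?_)
          exact Finset.le_sup (f := fun t => wordLength (S : Set π) t) ht
      _ = (A * B) * Lk S ⇑φ k := by ring
  -- comparison S' vs T : Schreier (undistortion)
  obtain ⟨K, hK⟩ := schreier_bound N T hTtop S' hS'
  have hC3 : ∀ k, Lk S' f' k ≤ (2 * K + 2) * Lk T ⇑φ k := by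
    intro k
    refine Finset.sup_le fun s hs => ?_
    have h1 : wordLength (S' : Set N) (f'^[k] s) ≤
        K * wordLength (T : Set π) ((f'^[k] s : N) : π) + K := hK _
    rw [hcoe k s] at h1
    have h2 : wordLength (T : Set π) ((⇑φ)^[k] (s : π)) ≤
        Lk T ⇑φ k * wordLength (T : Set π) (s : π) := Lk_apply_le hTtop hfmul k _
    have h3 : wordLength (T : Set π) ((s : π)) ≤ 1 := by
      have h31 : wordLength (T : Set π) ((s : π)) ≤ ([(s : π)] : List π).length := by
        refine wordLength_le_of_word ?_ (by simp)
        intro x hx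
        simp only [List.mem_singleton] at hx
        subst hx
        exact Or.inl (hmemT s hs)
      simpa using h31
    have h4 : 1 ≤ Lk T ⇑φ k := hposT k
    nlinarith [Nat.zero_le (Lk T ⇑φ k)]
  -- comparison T vs S' : rep-orbit induction
  set D : ℕ := R.sup (fun r => schreierCost N S' (φ r)) with hDdef
  have hind : ∀ k, ∀ r ∈ R, wordLength (T : Set π) ((⇑φ)^[k] r) ≤
      D * (∑ j ∈ Finset.range k, Lk S' f' j) + 1 := by
    intro k
    induction k with
    | zero =>
        intro r hr
        have h01 : wordLength (T : Set π) ((⇑φ)^[0] r) ≤ ([r] : List π).length := by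
          refine wordLength_le_of_word ?_ (by simp)
          intro x hx
          simp only [List.mem_singleton] at hx
          subst hx
          exact Or.inl (hmemT' x hr)
        simpa using h01
    | succ n ih =>
        intro r hr
        set h0 : N := (⟨φ r * (rep' N (φ r))⁻¹, rep'_spec N _⟩ : N) with hh0def
        have hsplit : (⇑φ)^[n + 1] r = (⇑φ)^[n] ((h0 : π)) * (⇑φ)^[n] (rep' N (φ r)) := by
          rw [Function.iterate_succ_apply, ← iterate_mul hfmul n]
          congr 1
          simp [hh0def]
    
        have hb1 : wordLength (T : Set π) ((⇑φ)^[n] ((h0 : π))) ≤ Lk S' f' n * D := by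
          rw [← hcoe n h0]
          refine le_trans (hcoeWL _) ?_
          refine le_trans (Lk_apply_le hS' hf'mul n h0) ?_
          refine Nat.mul_le_mul_left _ ?_
          exact Finset.le_sup (f := fun r => schreierCost N S' (φ r)) hr
        have hb2 : wordLength (T : Set π) ((⇑φ)^[n] (rep' N (φ r))) ≤
            D * (∑ j ∈ Finset.range n, Lk S' f' j) + 1 := ih _ (rep'_mem_repSet N (φ r))
        calc wordLength (T : Set π) ((⇑φ)^[n + 1] r)
            ≤ wordLength (T : Set π) ((⇑φ)^[n] ((h0 : π))) +
              wordLength (T : Set π) ((⇑φ)^[n] (rep' N (φ r))) := by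
              rw [hsplit]
              exact wordLength_mul_le hTtop _ _
          _ ≤ Lk S' f' n * D + (D * (∑ j ∈ Finset.range n, Lk S' f' j) + 1) :=
              Nat.add_le_add hb1 hb2
          _ ≤ D * (∑ j ∈ Finset.range (n + 1), Lk S' f' j) + 1 := by
              rw [Finset.sum_range_succ, Nat.mul_add]
              have : Lk S' f' n * D = D * Lk S' f' n := Nat.mul_comm _ _
              omega
  have hC2 : ∀ k, Lk T ⇑φ k ≤ (D + 1) * ∑ j ∈ Finset.range (k + 1), Lk S' f' j := by
    intro k
    have hsum1 : 1 ≤ ∑ j ∈ Finset.range (k + 1), Lk S' f' j := by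
      calc 1 ≤ Lk S' f' k := hposS' k
        _ ≤ _ := Finset.single_le_sum (f := fun j => Lk S' f' j)
            (fun i _ => Nat.zero_le _) (Finset.mem_range.2 (Nat.lt_succ_self k))
    refine Finset.sup_le fun t ht => ?_
    rcases Finset.mem_union.1 ht with h | h
    · obtain ⟨s, hs, rfl⟩ := Finset.mem_image.1 h
      have h1 : wordLength (T : Set π) ((⇑φ)^[k] ((s : π))) ≤ Lk S' f' k := by
        rw [← hcoe k s]
        refine le_trans (hcoeWL _) ?_
        exact wordLength_le_Lk hs k
      calc wordLength (T : Set π) ((⇑φ)^[k] ((s : π))) ≤ Lk S' f' k := h1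
        _ ≤ ∑ j ∈ Finset.range (k + 1), Lk S' f' j :=
            Finset.single_le_sum (f := fun j => Lk S' f' j)
              (fun i _ => Nat.zero_le _) (Finset.mem_range.2 (Nat.lt_succ_self k))
        _ ≤ (D + 1) * ∑ j ∈ Finset.range (k + 1), Lk S' f' j := by
            nlinarith [Nat.zero_le D]
    · have h1 := hind k t h
      have hmono : (∑ j ∈ Finset.range k, Lk S' f' j) ≤
          ∑ j ∈ Finset.range (k + 1), Lk S' f' j := by
        rw [Finset.sum_range_succ]
        omega
      calc wordLength (T : Set π) ((⇑φ)^[k] t)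
          ≤ D * (∑ j ∈ Finset.range k, Lk S' f' j) + 1 := h1
        _ ≤ D * (∑ j ∈ Finset.range (k + 1), Lk S' f' j) +
            ∑ j ∈ Finset.range (k + 1), Lk S' f' j := by
            have := Nat.mul_le_mul_left D hmono
            omega
        _ = (D + 1) * ∑ j ∈ Finset.range (k + 1), Lk S' f' j := by ring
  -- assemble the four inequalities
  have hsubT : ∀ a b, Lk T ⇑φ (a + b) ≤ Lk T ⇑φ a * Lk T ⇑φ b :=
    fun a b => Lk_add_le hTtop hfmul a b
  have hsubS : ∀ a b, Lk S ⇑φ (a + b) ≤ Lk S ⇑φ a * Lk S ⇑φ b :=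
    fun a b => Lk_add_le hS hfmul a b
  have hsubS' : ∀ a b, Lk S' f' (a + b) ≤ Lk S' f' a * Lk S' f' b :=
    fun a b => Lk_add_le hS' hf'mul a b
  have hsingle : ∀ (M : ℕ → ℕ) (k : ℕ), M k ≤ ∑ j ∈ Finset.range (k + 1), M j :=
    fun M k => Finset.single_le_sum (f := fun j => M j)
      (fun i _ => Nat.zero_le _) (Finset.mem_range.2 (Nat.lt_succ_self k))
  have E1 : (⨅ k : ℕ+, (Lk S ⇑φ k : ℝ) ^ (((k : ℕ) : ℝ))⁻¹) ≤
      ⨅ k : ℕ+, (Lk T ⇑φ k : ℝ) ^ (((k : ℕ) : ℝ))⁻¹ := by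
    refine inf_le_inf_of_dominated _ _ hsubT hposT (A * B) fun k hk => ?_
    exact le_trans (hC1 k) (Nat.mul_le_mul_left _ (hsingle _ k))
  have E2 : (⨅ k : ℕ+, (Lk T ⇑φ k : ℝ) ^ (((k : ℕ) : ℝ))⁻¹) ≤
      ⨅ k : ℕ+, (Lk S ⇑φ k : ℝ) ^ (((k : ℕ) : ℝ))⁻¹ := by
    refine inf_le_inf_of_dominated _ _ hsubS hposS (A * B) fun k hk => ?_
    exact le_trans (hC1' k) (Nat.mul_le_mul_left _ (hsingle _ k))
  have E3 : (⨅ k : ℕ+, (Lk T ⇑φ k : ℝ) ^ (((k : ℕ) : ℝ))⁻¹) ≤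
      ⨅ k : ℕ+, (Lk S' f' k : ℝ) ^ (((k : ℕ) : ℝ))⁻¹ := by
    refine inf_le_inf_of_dominated _ _ hsubS' hposS' (D + 1) fun k hk => hC2 k
  have E4 : (⨅ k : ℕ+, (Lk S' f' k : ℝ) ^ (((k : ℕ) : ℝ))⁻¹) ≤
      ⨅ k : ℕ+, (Lk T ⇑φ k : ℝ) ^ (((k : ℕ) : ℝ))⁻¹ := by
    refine inf_le_inf_of_dominated _ _ hsubT hposT (2 * K + 2) fun k hk => ?_
    exact le_trans (hC3 k) (Nat.mul_le_mul_left _ (hsingle _ k))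
  show GR S ⇑φ = GR S' f'
  unfold GR
  exact le_antisymm (E1.trans E3) (E4.trans E2)
end

section
/- Let π be a finitely generated group, φ: π → π an endomorphism, and π' a φ-invariant subgroup of finite index in π. If the restriction φ' = φ|_{π'} is an eventually trivial endomorphism of π', then GR(φ') = 0 and GR(φ) ∈ {0, 1}; moreover, GR(φ) = 0 if and only if φ is an eventually trivial endomorphism of π. -/
open Filter Topology

lemma wordLength_one {G : Type*} [Group G] (S : Set G) : wordLength S 1 = 0 := by
  apply Nat.sInf_eq_zero.mpr
  exact Or.inl ⟨[], rfl, by simp, rfl⟩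

lemma wordLength_eq_zero_iff {G : Type*} [Group G] (S : Set G)
    (hS : Subgroup.closure S = ⊤) (g : G) :
    wordLength S g = 0 ↔ g = 1 := by
  constructor
  · intro h
    have hmem : g ∈ Submonoid.closure (S ∪ S⁻¹) := by
      rw [← Subgroup.closure_toSubmonoid, hS]; trivial
    obtain ⟨l, hl, hp⟩ := Submonoid.exists_list_of_mem_closure hmem
    have hne : {n : ℕ | ∃ w : List G, w.length = n ∧ (∀ x ∈ w, x ∈ S ∨ x⁻¹ ∈ S) ∧ w.prod = g}.Nonempty := by
      refine ⟨l.length, l, rfl, fun x hx => ?_, hp⟩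
      rcases hl x hx with h | h
      · exact Or.inl h
      · exact Or.inr (Set.mem_inv.mp h)
    have hm := Nat.sInf_mem hne
    rw [wordLength] at h
    rw [h] at hm
    obtain ⟨w, hw0, _, hwp⟩ := hm
    rw [List.length_eq_zero_iff.mp hw0] at hwp
    simpa using hwp.symm
  · rintro rfl; exact wordLength_one _

lemma GR_eq_zero_of_eventuallyTrivial {G : Type*} [Group G] (S : Finset G) (f : G → G)
    (h : EventuallyTrivial f) : GR S f = 0 := by
  obtain ⟨M, hM, hMt⟩ := h
  have hterm : ∀ k : ℕ+, (0:ℝ) ≤ (Lk S f k : ℝ) ^ (((k : ℕ) : ℝ))⁻¹ :=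
    fun k => Real.rpow_nonneg (by positivity) _
  have hbdd : BddBelow (Set.range fun k : ℕ+ => (Lk S f k : ℝ) ^ (((k : ℕ) : ℝ))⁻¹) :=
    ⟨0, by rintro x ⟨k, rfl⟩; exact hterm k⟩
  have hLkM : Lk S f M = 0 := by
    refine Nat.le_zero.mp (Finset.sup_le fun s _ => ?_)
    rw [hMt s, wordLength_one]
  refine le_antisymm ?_ (le_ciInf hterm)
  have h1 := ciInf_le hbdd (⟨M, hM⟩ : ℕ+)
  refine h1.trans_eq ?_
  show (Lk S f M : ℝ) ^ ((M : ℝ))⁻¹ = 0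
  rw [hLkM, Nat.cast_zero]
  exact Real.zero_rpow (inv_ne_zero (Nat.cast_ne_zero.mpr hM.ne'))

lemma iterate_val' {π : Type*} [Group π] (φ : π →* π) (N : Subgroup π)
    (hinv : ∀ g ∈ N, φ g ∈ N) (k : ℕ) (x : N) :
    (((fun x : N => (⟨φ x, hinv x x.2⟩ : N))^[k] x : N) : π) = φ^[k] (x : π) := by
  induction k generalizing x with
  | zero => simp
  | succ k ih =>
    rw [Function.iterate_succ_apply, Function.iterate_succ_apply]
    exact ih _

/-- If `π'` is a `φ`-invariant finite-index subgroup of the finitely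
generated group `π` and the restriction `φ' = φ|_{π'}` is eventually trivial, then
`GR(φ') = 0`, `GR(φ) ∈ {0, 1}`, and `GR(φ) = 0` iff `φ` is eventually trivial. -/
theorem GR_of_finiteIndex_eventuallyTrivial {π : Type*} [Group π] (S : Finset π)
    (hS : Subgroup.closure (S : Set π) = ⊤) (φ : π →* π)
    (N : Subgroup π) [N.FiniteIndex] (hinv : ∀ g ∈ N, φ g ∈ N)
    (S' : Finset N) (hS' : Subgroup.closure (S' : Set N) = ⊤)
    (ht : EventuallyTrivial (fun x : N => (⟨φ x, hinv x x.2⟩ : N))) :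
    GR S' (fun x : N => (⟨φ x, hinv x x.2⟩ : N)) = 0 ∧
    (GR S ⇑φ = 0 ∨ GR S ⇑φ = 1) ∧
    (GR S ⇑φ = 0 ↔ EventuallyTrivial ⇑φ) := by
  refine ⟨GR_eq_zero_of_eventuallyTrivial _ _ ht, ?_⟩
  by_cases hevt : EventuallyTrivial ⇑φ
  · have h0 : GR S ⇑φ = 0 := GR_eq_zero_of_eventuallyTrivial _ _ hevt
    exact ⟨Or.inl h0, by simp [h0, hevt]⟩
  -- φ is not eventually trivial; show GR S φ = 1
  obtain ⟨M, hM0, hMt⟩ := ht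
  -- the kernel of φ^[M]
  set ψ : π →* π := MonoidHom.mk' (φ^[M]) (fun a b => iterate_map_mul φ M a b) with hψ
  set K : Subgroup π := ψ.ker with hK
  have hNK : N ≤ K := by
    intro g hg
    have h1 := congrArg (Subtype.val) (hMt ⟨g, hg⟩)
    rw [iterate_val' φ N hinv M ⟨g, hg⟩] at h1
    exact h1
  haveI : K.FiniteIndex := Subgroup.finiteIndex_of_le hNK
  haveI hfinq : Finite (Quotient (QuotientGroup.leftRel K)) :=
    (Subgroup.finite_quotient_of_finiteIndex : Finite (π ⧸ K))
  -- range of φ^[M] is finite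
  have hwd : ∀ a b : π, (QuotientGroup.leftRel K) a b → φ^[M] a = φ^[M] b := by
    intro a b hab
    have hab' : φ^[M] (a⁻¹ * b) = 1 := QuotientGroup.leftRel_apply.mp hab
    rw [iterate_map_mul, iterate_map_inv] at hab'
    have h2 := congrArg (fun x => (φ^[M] a) * x) hab'
    simpa [mul_assoc] using h2.symm
  have hfin : (Set.range (φ^[M] : π → π)).Finite := by
    have hsub : Set.range (φ^[M] : π → π) ⊆
        Set.range (Quotient.lift (φ^[M] : π → π) hwd : π ⧸ K → π) := by
      rintro x ⟨g, rfl⟩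
      exact ⟨QuotientGroup.mk g, rfl⟩
    exact (Set.finite_range _).subset hsub
  set C : ℕ := hfin.toFinset.sup (wordLength (S : Set π)) with hC
  -- Lk is bounded above by C for k ≥ M
  have hLk_le : ∀ k, M ≤ k → Lk S (⇑φ) k ≤ C := by
    intro k hk
    refine Finset.sup_le fun s _ => ?_
    refine Finset.le_sup (hfin.mem_toFinset.mpr ⟨φ^[k - M] s, ?_⟩)
    rw [← Function.iterate_add_apply, Nat.add_sub_cancel' hk]
  -- Lk is at least 1 for all k ≥ 1
  have hLk_ge : ∀ k : ℕ, 0 < k → 1 ≤ Lk S (⇑φ) k := by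
    intro k hk
    by_contra hcon
    have hLk0 : Lk S (⇑φ) k = 0 := by omega
    have hall : ∀ g : π, φ^[k] g = 1 := by
      intro g
      have hg : g ∈ Subgroup.closure (S : Set π) := by rw [hS]; trivial
      induction hg using Subgroup.closure_induction with
      | mem s hs =>
        have h1 : wordLength (S : Set π) (φ^[k] s) = 0 :=
          Nat.le_zero.mp ((Finset.le_sup hs).trans hLk0.le)
        exact (wordLength_eq_zero_iff _ hS _).mp h1
      | one => simp [iterate_map_one]
      | mul a b _ _ ha hb => rw [iterate_map_mul, ha, hb, one_mul]
      | inv a _ ha => rw [iterate_map_inv, ha, inv_one]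
    exact hevt ⟨k, hk, hall⟩
  have hC1 : 1 ≤ C := (hLk_ge M hM0).trans (hLk_le M le_rfl)
  have hGR1 : GR S ⇑φ = 1 := by
    have hterm : ∀ k : ℕ+, (1:ℝ) ≤ (Lk S (⇑φ) k : ℝ) ^ (((k : ℕ) : ℝ))⁻¹ := by
      intro k
      refine Real.one_le_rpow ?_ (by positivity)
      exact_mod_cast hLk_ge k k.2
    have hbdd : BddBelow (Set.range fun k : ℕ+ => (Lk S (⇑φ) k : ℝ) ^ (((k : ℕ) : ℝ))⁻¹) :=
      ⟨1, by rintro x ⟨k, rfl⟩; exact hterm k⟩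
    refine le_antisymm ?_ (le_ciInf hterm)
    -- upper bound via limit of C^(1/(M+j))
    have hCpos : (0:ℝ) < (C : ℝ) := by exact_mod_cast hC1.trans_lt' Nat.zero_lt_one
    have hexp : Tendsto (fun j : ℕ => (((M + j : ℕ) : ℝ))⁻¹) atTop (𝓝 0) := by
      have h1 : Tendsto (fun j : ℕ => ((M + j : ℕ) : ℝ)) atTop atTop := by
        apply tendsto_natCast_atTop_atTop.comp
        have := tendsto_add_atTop_nat M
        simpa [add_comm] using this
      exact (tendsto_inv_atTop_zero).comp h1
    have htend : Tendsto (fun j : ℕ => (C : ℝ) ^ (((M + j : ℕ) : ℝ))⁻¹) atTop (𝓝 1) := by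
      have hc := (Real.continuousAt_const_rpow (a := (C:ℝ)) (b := 0) hCpos.ne').tendsto
      have h2 := hc.comp hexp
      simpa [Real.rpow_zero, Function.comp_def] using h2
    refine ge_of_tendsto' htend fun j => ?_
    have h1 : GR S ⇑φ ≤ (Lk S (⇑φ) ((⟨M + j, by omega⟩ : ℕ+) : ℕ) : ℝ) ^
        ((((⟨M + j, by omega⟩ : ℕ+) : ℕ) : ℝ))⁻¹ :=
      ciInf_le hbdd (⟨M + j, by omega⟩ : ℕ+)
    refine h1.trans ?_
    exact Real.rpow_le_rpow (by positivity)
      (by exact_mod_cast hLk_le (M + j) (by omega)) (by positivity)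
  exact ⟨Or.inr hGR1, by rw [hGR1]; simp [hevt]⟩
end
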